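/- Main error bound (ℓ∞-term): Under the same assumptions (x̂ the constrained LASSO solution, x* feasible with ‖Φ̃ᵀ(Φ̃x* − ỹ)‖∞ ≤ λΔ/2, A₀(Φ̃) > 0, Φ̃ with M̃ rows), the error h = x̂ − x* satisfies ‖h‖₂ ≤ C₂(Φ̃)√M̃ Δ + (C₁(Φ̃)/√l)‖x*_{T₀ᶜ}‖₁. -/

import Mathlib

def restrict {N : ℕ} (T : Finset (Fin N)) (h : Fin N → ℝ) : Fin N → ℝ :=
  fun i => if i ∈ T then h i else 0

def l2sq {m : ℕ} (v : Fin m → ℝ) : ℝ := ∑ i, v i ^ 2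
noncomputable def l2Norm {m : ℕ} (v : Fin m → ℝ) : ℝ := Real.sqrt (∑ i, v i ^ 2)
def l1Norm {N : ℕ} (v : Fin N → ℝ) : ℝ := ∑ i, |v i|
noncomputable def linfNorm {m : ℕ} (v : Fin m → ℝ) : ℝ := ⨆ i, |v i|

def ip {m : ℕ} (u v : Fin m → ℝ) : ℝ := ∑ i, u i * v i

lemma l2sq_nonneg {m : ℕ} (v : Fin m → ℝ) : 0 ≤ l2sq v :=
  Finset.sum_nonneg fun i _ => sq_nonneg _

lemma l2Norm_eq {m : ℕ} (v : Fin m → ℝ) : l2Norm v = Real.sqrt (l2sq v) := rfl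

lemma l2Norm_nonneg {m : ℕ} (v : Fin m → ℝ) : 0 ≤ l2Norm v := Real.sqrt_nonneg _

lemma l2Norm_sq {m : ℕ} (v : Fin m → ℝ) : l2Norm v ^ 2 = l2sq v :=
  Real.sq_sqrt (l2sq_nonneg v)

lemma l2sq_zero {m : ℕ} : l2sq (0 : Fin m → ℝ) = 0 := by simp [l2sq]

lemma l2sq_eq_zero_iff {m : ℕ} (v : Fin m → ℝ) : l2sq v = 0 ↔ v = 0 := by
  constructor
  · intro h
    funext i
    have := (Finset.sum_eq_zero_iff_of_nonneg (fun i _ => sq_nonneg (v i))).1 h i (Finset.mem_univ i)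
    exact pow_eq_zero_iff (by norm_num) |>.1 this
  · intro h; rw [h]; exact l2sq_zero

lemma l2sq_pos_of_ne_zero {m : ℕ} {v : Fin m → ℝ} (h : v ≠ 0) : 0 < l2sq v :=
  lt_of_le_of_ne (l2sq_nonneg v) (fun e => h ((l2sq_eq_zero_iff v).1 e.symm))

lemma l2sq_add {m : ℕ} (u v : Fin m → ℝ) :
    l2sq (u + v) = l2sq u + 2 * ip u v + l2sq v := by
  simp only [l2sq, ip, Pi.add_apply, Finset.mul_sum, ← Finset.sum_add_distrib]
  exact Finset.sum_congr rfl fun i _ => by ring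

lemma abs_ip_le {m : ℕ} (u v : Fin m → ℝ) : |ip u v| ≤ l2Norm u * l2Norm v := by
  have h := Finset.sum_mul_sq_le_sq_mul_sq Finset.univ u v
  have : ip u v ^ 2 ≤ (l2Norm u * l2Norm v) ^ 2 := by
    rw [mul_pow, l2Norm_sq, l2Norm_sq]; exact h
  have h2 : 0 ≤ l2Norm u * l2Norm v := mul_nonneg (l2Norm_nonneg u) (l2Norm_nonneg v)
  have h3 := Real.sqrt_le_sqrt this
  rwa [Real.sqrt_sq_eq_abs, Real.sqrt_sq h2] at h3
noncomputable def rhoMinus {m N : ℕ} (k : ℕ) (Ψ : Matrix (Fin m) (Fin N) ℝ) : ℝ :=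
  sInf {r | ∃ (T : Finset (Fin N)) (h : Fin N → ℝ), T.card ≤ k ∧ restrict T h ≠ 0 ∧
    r = l2sq (Ψ.mulVec (restrict T h)) / l2sq (restrict T h)}

noncomputable def rhoPlus {m N : ℕ} (k : ℕ) (Ψ : Matrix (Fin m) (Fin N) ℝ) : ℝ :=
  sSup {r | ∃ (T : Finset (Fin N)) (h : Fin N → ℝ), T.card ≤ k ∧ restrict T h ≠ 0 ∧
    r = l2sq (Ψ.mulVec (restrict T h)) / l2sq (restrict T h)}

noncomputable def A0 {m N : ℕ} (s l : ℕ) (Ψ : Matrix (Fin m) (Fin N) ℝ) : ℝ :=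
  rhoMinus (s + l) Ψ - 3 * Real.sqrt ((s : ℝ) / l) * (rhoPlus (s + 2 * l) Ψ - rhoMinus (s + 2 * l) Ψ)

noncomputable def A1 {m N : ℕ} (s l : ℕ) (Ψ : Matrix (Fin m) (Fin N) ℝ) : ℝ :=
  4 * (rhoPlus (s + 2 * l) Ψ - rhoMinus (s + 2 * l) Ψ)

noncomputable def C1 {m N : ℕ} (s l : ℕ) (Ψ : Matrix (Fin m) (Fin N) ℝ) : ℝ :=
  4 + Real.sqrt (1 + 9 * (s : ℝ) / l) * A1 s l Ψ / A0 s l Ψ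

noncomputable def C2 {m N : ℕ} (s l : ℕ) (Ψ : Matrix (Fin m) (Fin N) ℝ) : ℝ :=
  Real.sqrt ((1 + 9 * (s : ℝ) / l) / A0 s l Ψ)
noncomputable def lassoObj {Mt N : ℕ} (Φ : Matrix (Fin Mt) (Fin N) ℝ) (y : Fin Mt → ℝ)
    (lam Δ : ℝ) (x : Fin N → ℝ) : ℝ :=
  (1 / 2) * l2sq (Φ.mulVec x - y) + lam * Δ * l1Norm x

/-- Feasible set: ℓ∞ quantization constraint plus affine saturation constraints. -/
def feasible {Mt Mb N : ℕ} (Φt : Matrix (Fin Mt) (Fin N) ℝ) (yt : Fin Mt → ℝ)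
    (Φb : Matrix (Fin Mb) (Fin N) ℝ) (yb : Fin Mb → ℝ) (Δ : ℝ) : Set (Fin N → ℝ) :=
  {x | (∀ i, |(Φt.mulVec x - yt) i| ≤ Δ / 2) ∧ ∀ i, yb i ≤ Φb.mulVec x i}
section aux2
variable {m N : ℕ}

lemma restrict_apply (T : Finset (Fin N)) (h : Fin N → ℝ) (i : Fin N) :
    restrict T h i = if i ∈ T then h i else 0 := rfl

lemma restrict_union {A B : Finset (Fin N)} (hAB : Disjoint A B) (h : Fin N → ℝ) :
    restrict (A ∪ B) h = restrict A h + restrict B h := by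
  funext i
  simp only [restrict, Pi.add_apply, Finset.mem_union]
  by_cases hA : i ∈ A
  · have hB : i ∉ B := fun hB => (Finset.disjoint_left.1 hAB hA) hB
    simp [hA, hB]
  · by_cases hB : i ∈ B <;> simp [hA, hB]

lemma restrict_split (T : Finset (Fin N)) (S : Finset (Fin N)) (hT : T ⊆ S) (h : Fin N → ℝ) :
    restrict S h = restrict T h + restrict (S \ T) h := by
  rw [← restrict_union Finset.disjoint_sdiff, Finset.union_sdiff_of_subset hT]

lemma eq_restrict_add_compl (T : Finset (Fin N)) (h : Fin N → ℝ) :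
    h = restrict T h + restrict Tᶜ h := by
  funext i
  simp only [restrict, Pi.add_apply, Finset.mem_compl]
  by_cases hT : i ∈ T <;> simp [hT]

lemma l2sq_restrict (T : Finset (Fin N)) (h : Fin N → ℝ) :
    l2sq (restrict T h) = ∑ i ∈ T, h i ^ 2 := by
  rw [l2sq]
  rw [show (∑ i, restrict T h i ^ 2) = ∑ i, if i ∈ T then h i ^ 2 else 0 from
    Finset.sum_congr rfl fun i _ => by by_cases hi : i ∈ T <;> simp [restrict, hi]]
  rw [Finset.sum_ite_mem, Finset.univ_inter]

lemma l1Norm_restrict (T : Finset (Fin N)) (h : Fin N → ℝ) :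
    l1Norm (restrict T h) = ∑ i ∈ T, |h i| := by
  rw [l1Norm]
  rw [show (∑ i, |restrict T h i|) = ∑ i, if i ∈ T then |h i| else 0 from
    Finset.sum_congr rfl fun i _ => by by_cases hi : i ∈ T <;> simp [restrict, hi]]
  rw [Finset.sum_ite_mem, Finset.univ_inter]

lemma l1Norm_nonneg (v : Fin N → ℝ) : 0 ≤ l1Norm v :=
  Finset.sum_nonneg fun i _ => abs_nonneg _

lemma l1Norm_restrict_mono {A B : Finset (Fin N)} (hAB : A ⊆ B) (h : Fin N → ℝ) :
    l1Norm (restrict A h) ≤ l1Norm (restrict B h) := by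
  rw [l1Norm_restrict, l1Norm_restrict]
  exact Finset.sum_le_sum_of_subset_of_nonneg hAB fun i _ _ => abs_nonneg _

lemma l2sq_restrict_mono {A B : Finset (Fin N)} (hAB : A ⊆ B) (h : Fin N → ℝ) :
    l2sq (restrict A h) ≤ l2sq (restrict B h) := by
  rw [l2sq_restrict, l2sq_restrict]
  exact Finset.sum_le_sum_of_subset_of_nonneg hAB fun i _ _ => sq_nonneg _

lemma l2Norm_restrict_mono {A B : Finset (Fin N)} (hAB : A ⊆ B) (h : Fin N → ℝ) :
    l2Norm (restrict A h) ≤ l2Norm (restrict B h) :=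
  Real.sqrt_le_sqrt (l2sq_restrict_mono hAB h)

lemma ip_restrict_disjoint {A B : Finset (Fin N)} (hAB : Disjoint A B) (u v : Fin N → ℝ) :
    ip (restrict A u) (restrict B v) = 0 := by
  apply Finset.sum_eq_zero
  intro i _
  by_cases hA : i ∈ A
  · have hB : i ∉ B := fun hB => (Finset.disjoint_left.1 hAB hA) hB
    simp [restrict, hB]
  · simp [restrict, hA]

lemma l1_le_sqrt_card_mul_l2 (T : Finset (Fin N)) (h : Fin N → ℝ) :
    l1Norm (restrict T h) ≤ Real.sqrt T.card * l2Norm (restrict T h) := by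
  rw [l1Norm_restrict]
  have hcs := Finset.sum_mul_sq_le_sq_mul_sq T (fun _ => (1:ℝ)) (fun i => |h i|)
  simp only [one_mul, one_pow, Finset.sum_const, nsmul_eq_mul, mul_one, sq_abs] at hcs
  have h1 : (∑ i ∈ T, |h i|) ^ 2 ≤ (T.card : ℝ) * l2sq (restrict T h) := by
    rw [l2sq_restrict]; exact hcs
  have h2 : 0 ≤ Real.sqrt T.card * l2Norm (restrict T h) :=
    mul_nonneg (Real.sqrt_nonneg _) (l2Norm_nonneg _)
  have h3 := Real.sqrt_le_sqrt h1
  rw [Real.sqrt_sq_eq_abs] at h3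
  calc ∑ i ∈ T, |h i| ≤ abs (∑ i ∈ T, |h i|) := le_abs_self _
    _ ≤ Real.sqrt ((T.card : ℝ) * l2sq (restrict T h)) := h3
    _ = Real.sqrt T.card * l2Norm (restrict T h) := by
        rw [Real.sqrt_mul (Nat.cast_nonneg _), l2Norm_eq]

end aux2
section aux3
variable {m N : ℕ} (Ψ : Matrix (Fin m) (Fin N) ℝ)

def rhoSet (k : ℕ) (Ψ : Matrix (Fin m) (Fin N) ℝ) : Set ℝ :=
  {r | ∃ (T : Finset (Fin N)) (h : Fin N → ℝ), T.card ≤ k ∧ restrict T h ≠ 0 ∧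
    r = l2sq (Ψ.mulVec (restrict T h)) / l2sq (restrict T h)}

lemma rhoMinus_eq (k : ℕ) : rhoMinus k Ψ = sInf (rhoSet k Ψ) := rfl
lemma rhoPlus_eq (k : ℕ) : rhoPlus k Ψ = sSup (rhoSet k Ψ) := rfl

lemma l2sq_mulVec_le (w : Fin N → ℝ) :
    l2sq (Ψ.mulVec w) ≤ (∑ i, ∑ j, Ψ i j ^ 2) * l2sq w := by
  rw [l2sq, Finset.sum_mul]
  apply Finset.sum_le_sum
  intro i _
  have := Finset.sum_mul_sq_le_sq_mul_sq Finset.univ (fun j => Ψ i j) w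
  simpa [Matrix.mulVec, dotProduct, l2sq] using this

lemma rhoSet_bddBelow (k : ℕ) : BddBelow (rhoSet k Ψ) := by
  refine ⟨0, fun r hr => ?_⟩
  obtain ⟨T, h, _, _, rfl⟩ := hr
  exact div_nonneg (l2sq_nonneg _) (l2sq_nonneg _)

lemma rhoSet_bddAbove (k : ℕ) : BddAbove (rhoSet k Ψ) := by
  refine ⟨∑ i, ∑ j, Ψ i j ^ 2, fun r hr => ?_⟩
  obtain ⟨T, h, _, hne, rfl⟩ := hr
  rw [div_le_iff₀ (l2sq_pos_of_ne_zero hne)]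
  exact l2sq_mulVec_le Ψ _

lemma rho_lower {k : ℕ} {T : Finset (Fin N)} (hT : T.card ≤ k) (h : Fin N → ℝ) :
    rhoMinus k Ψ * l2sq (restrict T h) ≤ l2sq (Ψ.mulVec (restrict T h)) := by
  by_cases hne : restrict T h = 0
  · rw [hne]; simp [l2sq_zero, Matrix.mulVec_zero, l2sq_nonneg, le_refl]
  · have hmem : l2sq (Ψ.mulVec (restrict T h)) / l2sq (restrict T h) ∈ rhoSet k Ψ :=
      ⟨T, h, hT, hne, rfl⟩
    have hle := csInf_le (rhoSet_bddBelow Ψ k) hmem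
    rw [rhoMinus_eq]
    have hpos := l2sq_pos_of_ne_zero hne
    calc sInf (rhoSet k Ψ) * l2sq (restrict T h)
        ≤ (l2sq (Ψ.mulVec (restrict T h)) / l2sq (restrict T h)) * l2sq (restrict T h) :=
          mul_le_mul_of_nonneg_right hle hpos.le
      _ = l2sq (Ψ.mulVec (restrict T h)) := div_mul_cancel₀ _ hpos.ne'

lemma rho_upper {k : ℕ} {T : Finset (Fin N)} (hT : T.card ≤ k) (h : Fin N → ℝ) :
    l2sq (Ψ.mulVec (restrict T h)) ≤ rhoPlus k Ψ * l2sq (restrict T h) := by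
  by_cases hne : restrict T h = 0
  · rw [hne]; simp [l2sq_zero, Matrix.mulVec_zero, le_refl]
  · have hmem : l2sq (Ψ.mulVec (restrict T h)) / l2sq (restrict T h) ∈ rhoSet k Ψ :=
      ⟨T, h, hT, hne, rfl⟩
    have hle := le_csSup (rhoSet_bddAbove Ψ k) hmem
    rw [rhoPlus_eq]
    have hpos := l2sq_pos_of_ne_zero hne
    calc l2sq (Ψ.mulVec (restrict T h))
        = (l2sq (Ψ.mulVec (restrict T h)) / l2sq (restrict T h)) * l2sq (restrict T h) :=
          (div_mul_cancel₀ _ hpos.ne').symm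
      _ ≤ sSup (rhoSet k Ψ) * l2sq (restrict T h) := mul_le_mul_of_nonneg_right hle hpos.le

lemma rhoMinus_le_rhoPlus {k : ℕ} (hk : 1 ≤ k) (hN : 1 ≤ N) :
    rhoMinus k Ψ ≤ rhoPlus k Ψ := by
  have i0 : Fin N := ⟨0, hN⟩
  have hne : restrict {i0} (fun _ => (1:ℝ)) ≠ 0 := by
    intro hc
    have := congrFun hc i0
    simp [restrict] at this
  have hmem : l2sq (Ψ.mulVec (restrict {i0} (fun _ => (1:ℝ)))) /
      l2sq (restrict {i0} (fun _ => (1:ℝ))) ∈ rhoSet k Ψ :=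
    ⟨{i0}, fun _ => 1, by simpa using hk, hne, rfl⟩
  exact le_trans (csInf_le (rhoSet_bddBelow Ψ k) hmem) (le_csSup (rhoSet_bddAbove Ψ k) hmem)

end aux3
section aux4
variable {m N : ℕ} (Ψ : Matrix (Fin m) (Fin N) ℝ)

lemma restrict_smul_add_smul {U V : Finset (Fin N)} (u v : Fin N → ℝ) (α β : ℝ) :
    restrict (U ∪ V) (fun i => β * restrict U u i + α * restrict V v i) =
      (fun i => β * restrict U u i + α * restrict V v i) := by
  funext i
  simp only [restrict, Finset.mem_union]
  by_cases hU : i ∈ U <;> by_cases hV : i ∈ V <;> simp [hU, hV]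

lemma mulVec_comb (a c : Fin N → ℝ) (α β : ℝ) :
    Ψ.mulVec (fun i => β * a i + α * c i) = fun j => β * Ψ.mulVec a j + α * Ψ.mulVec c j := by
  funext j
  simp only [Matrix.mulVec, dotProduct, Finset.mul_sum, ← Finset.sum_add_distrib]
  exact Finset.sum_congr rfl fun i _ => by ring

lemma l2sq_comb_image (a c : Fin N → ℝ) (α β : ℝ) :
    l2sq (Ψ.mulVec (fun i => β * a i + α * c i)) =
      β ^ 2 * l2sq (Ψ.mulVec a) + 2 * α * β * ip (Ψ.mulVec a) (Ψ.mulVec c)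
        + α ^ 2 * l2sq (Ψ.mulVec c) := by
  rw [mulVec_comb]
  simp only [l2sq, ip, Finset.mul_sum, ← Finset.sum_add_distrib]
  exact Finset.sum_congr rfl fun j _ => by ring

lemma l2sq_comb (a c : Fin N → ℝ) (α β : ℝ) (hac : ip a c = 0)
    (ha : l2sq a = α ^ 2) (hc : l2sq c = β ^ 2) :
    l2sq (fun i => β * a i + α * c i) = 2 * α ^ 2 * β ^ 2 := by
  have expand : l2sq (fun i => β * a i + α * c i) =
      β ^ 2 * l2sq a + 2 * α * β * ip a c + α ^ 2 * l2sq c := by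
    simp only [l2sq, ip, Finset.mul_sum, ← Finset.sum_add_distrib]
    exact Finset.sum_congr rfl fun i _ => by ring
  rw [expand, hac, ha, hc]; ring

lemma cross_bound {k : ℕ} {U V : Finset (Fin N)} (hUV : Disjoint U V)
    (hcard : U.card + V.card ≤ k) (u v : Fin N → ℝ) :
    |ip (Ψ.mulVec (restrict U u)) (Ψ.mulVec (restrict V v))| ≤
      (rhoPlus k Ψ - rhoMinus k Ψ) / 2 * l2Norm (restrict U u) * l2Norm (restrict V v) := by
  have main : ∀ (u v : Fin N → ℝ),
      ip (Ψ.mulVec (restrict U u)) (Ψ.mulVec (restrict V v)) ≤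
      (rhoPlus k Ψ - rhoMinus k Ψ) / 2 * l2Norm (restrict U u) * l2Norm (restrict V v) := by
    clear u v
    intro u v
    by_cases hA : restrict U u = 0
    · simp [hA, Matrix.mulVec_zero, ip, l2Norm_eq, l2sq_zero]
    by_cases hB : restrict V v = 0
    · simp [hB, Matrix.mulVec_zero, ip, mul_zero, l2Norm_eq, l2sq_zero]
    have hαpos : 0 < l2Norm (restrict U u) := Real.sqrt_pos.2 (l2sq_pos_of_ne_zero hA)
    have hβpos : 0 < l2Norm (restrict V v) := Real.sqrt_pos.2 (l2sq_pos_of_ne_zero hB)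
    have hab : ip (restrict U u) (restrict V v) = 0 := ip_restrict_disjoint hUV u v
    have habneg : ip (restrict U u) (restrict V (fun j => - v j)) = 0 :=
      ip_restrict_disjoint hUV u _
    have hcardU : (U ∪ V).card ≤ k := le_trans (Finset.card_union_le U V) hcard
    set α := l2Norm (restrict U u) with hα
    set β := l2Norm (restrict V v) with hβ
    have hrneg : restrict V (fun j => - v j) = fun i => - restrict V v i := by
      funext i; simp only [restrict]; by_cases hV : i ∈ V <;> simp [hV]
    have hl2negr : l2sq (restrict V (fun j => - v j)) = β ^ 2 := by
      rw [hrneg]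
      have : (∑ i, (- restrict V v i) ^ 2) = ∑ i, (restrict V v i) ^ 2 :=
        Finset.sum_congr rfl fun i _ => by ring
      rw [show l2sq (fun i => - restrict V v i) = ∑ i, (- restrict V v i) ^ 2 from rfl, this,
        ← l2sq, ← l2Norm_sq]
    have hplus := rho_upper Ψ hcardU (fun i => β * restrict U u i + α * restrict V v i)
    rw [restrict_smul_add_smul u v] at hplus
    have hminus := rho_lower Ψ hcardU
      (fun i => β * restrict U u i + α * restrict V (fun j => - v j) i)
    rw [restrict_smul_add_smul u (fun j => - v j)] at hminus
    have hl2plus : l2sq (fun i => β * restrict U u i + α * restrict V v i) =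
        2 * α ^ 2 * β ^ 2 :=
      l2sq_comb _ _ _ _ hab (l2Norm_sq _).symm (l2Norm_sq _).symm
    have hl2minus : l2sq (fun i => β * restrict U u i + α * restrict V (fun j => - v j) i) =
        2 * α ^ 2 * β ^ 2 :=
      l2sq_comb _ _ _ _ habneg (l2Norm_sq _).symm hl2negr
    rw [hl2plus, l2sq_comb_image] at hplus
    rw [hl2minus, l2sq_comb_image] at hminus
    -- relate image inner products for negated v
    have hmvneg : Ψ.mulVec (restrict V (fun j => - v j)) = fun j => - Ψ.mulVec (restrict V v) j := by
      rw [hrneg]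
      funext j
      simp only [Matrix.mulVec, dotProduct, ← Finset.sum_neg_distrib]
      exact Finset.sum_congr rfl fun i _ => by ring
    have hipneg : ip (Ψ.mulVec (restrict U u)) (Ψ.mulVec (restrict V (fun j => - v j))) =
        - ip (Ψ.mulVec (restrict U u)) (Ψ.mulVec (restrict V v)) := by
      rw [hmvneg]
      simp only [ip, ← Finset.sum_neg_distrib]
      exact Finset.sum_congr rfl fun j _ => by ring
    have hl2imneg : l2sq (Ψ.mulVec (restrict V (fun j => - v j))) =
        l2sq (Ψ.mulVec (restrict V v)) := by
      rw [hmvneg]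
      simp only [l2sq]
      exact Finset.sum_congr rfl fun j _ => by ring
    rw [hipneg, hl2imneg] at hminus
    have hposαβ : 0 < α * β := mul_pos hαpos hβpos
    nlinarith [hplus, hminus, hposαβ]
  have h1 := main u v
  have h2 := main u (fun j => - v j)
  have hrneg : restrict V (fun j => - v j) = fun i => - restrict V v i := by
    funext i; simp only [restrict]; by_cases hV : i ∈ V <;> simp [hV]
  have hmvneg2 : Ψ.mulVec (restrict V (fun j => - v j)) = fun j => - Ψ.mulVec (restrict V v) j := by
    rw [hrneg]
    funext j
    simp only [Matrix.mulVec, dotProduct, ← Finset.sum_neg_distrib]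
    exact Finset.sum_congr rfl fun i _ => by ring
  have hipneg2 : ip (Ψ.mulVec (restrict U u)) (Ψ.mulVec (restrict V (fun j => - v j))) =
      - ip (Ψ.mulVec (restrict U u)) (Ψ.mulVec (restrict V v)) := by
    rw [hmvneg2]
    simp only [ip, ← Finset.sum_neg_distrib]
    exact Finset.sum_congr rfl fun j _ => by ring
  have hl2neg2 : l2Norm (restrict V (fun j => - v j)) = l2Norm (restrict V v) := by
    rw [hrneg]
    rw [l2Norm_eq, l2Norm_eq]
    congr 1
    rw [show l2sq (fun i => - restrict V v i) = ∑ i, (- restrict V v i) ^ 2 from rfl]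
    exact Finset.sum_congr rfl fun i _ => by ring
  rw [hipneg2, hl2neg2] at h2
  exact abs_le.2 ⟨by linarith, h1⟩
end aux4
section aux5
variable {m N : ℕ}

lemma exists_top (g : Fin N → ℝ) (S : Finset (Fin N)) (k : ℕ) (hk : k ≤ S.card) :
    ∃ B ⊆ S, B.card = k ∧ ∀ i ∈ S \ B, ∀ j ∈ B, g i ≤ g j := by
  induction k with
  | zero => exact ⟨∅, Finset.empty_subset _, rfl, fun i _ j hj => absurd hj (Finset.notMem_empty j)⟩
  | succ k ih =>
    obtain ⟨B, hBS, hBcard, hBtop⟩ := ih (le_trans (Nat.le_succ k) hk)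
    have hne : (S \ B).Nonempty := by
      rw [← Finset.card_pos, Finset.card_sdiff_of_subset hBS, hBcard]
      omega
    obtain ⟨j0, hj0, hj0max⟩ := Finset.exists_max_image (S \ B) g hne
    have hj0B : j0 ∉ B := (Finset.mem_sdiff.1 hj0).2
    refine ⟨insert j0 B, ?_, ?_, ?_⟩
    · exact Finset.insert_subset (Finset.mem_sdiff.1 hj0).1 hBS
    · rw [Finset.card_insert_of_notMem hj0B, hBcard]
    · intro i hi j hj
      have hiS : i ∈ S := (Finset.mem_sdiff.1 hi).1
      have hiB' : i ∉ insert j0 B := (Finset.mem_sdiff.1 hi).2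
      have hiB : i ∉ B := fun h => hiB' (Finset.mem_insert_of_mem h)
      have hij0 : i ≠ j0 := fun h => hiB' (h ▸ Finset.mem_insert_self j0 B)
      rcases Finset.mem_insert.1 hj with rfl | hjB
      · exact hj0max i (Finset.mem_sdiff.2 ⟨hiS, hiB⟩)
      · exact hBtop i (Finset.mem_sdiff.2 ⟨hiS, hiB⟩) j hjB

lemma l2Norm_le_of_bdd {T : Finset (Fin N)} {h : Fin N → ℝ} {c : ℝ} (hc : 0 ≤ c)
    (hbdd : ∀ i ∈ T, |h i| ≤ c) (l : ℕ) (hcard : T.card ≤ l) :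
    l2Norm (restrict T h) ≤ Real.sqrt l * c := by
  have h1 : l2sq (restrict T h) ≤ (l : ℝ) * c ^ 2 := by
    rw [l2sq_restrict]
    calc ∑ i ∈ T, h i ^ 2 ≤ ∑ _i ∈ T, c ^ 2 := by
          apply Finset.sum_le_sum
          intro i hi
          rw [← sq_abs]
          exact pow_le_pow_left₀ (abs_nonneg _) (hbdd i hi) 2
      _ = (T.card : ℝ) * c ^ 2 := by rw [Finset.sum_const, nsmul_eq_mul]
      _ ≤ (l : ℝ) * c ^ 2 := by
          apply mul_le_mul_of_nonneg_right _ (sq_nonneg c)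
          exact_mod_cast hcard
  calc l2Norm (restrict T h) = Real.sqrt (l2sq (restrict T h)) := l2Norm_eq _
    _ ≤ Real.sqrt ((l : ℝ) * c ^ 2) := Real.sqrt_le_sqrt h1
    _ = Real.sqrt l * c := by
        rw [Real.sqrt_mul (Nat.cast_nonneg _), Real.sqrt_sq hc]

lemma key_ind {m N : ℕ} (Ψ : Matrix (Fin m) (Fin N) ℝ) (u h : Fin N → ℝ)
    (W : Finset (Fin N)) (l k : ℕ) (hl : 1 ≤ l) (hWk : W.card + l ≤ k)
    (hD : 0 ≤ rhoPlus k Ψ - rhoMinus k Ψ) :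
    ∀ n : ℕ, ∀ S : Finset (Fin N), S.card ≤ n → Disjoint W S →
      ∀ c : ℝ, 0 ≤ c → (∀ i ∈ S, |h i| ≤ c) →
    |ip (Ψ.mulVec (restrict W u)) (Ψ.mulVec (restrict S h))| ≤
      (rhoPlus k Ψ - rhoMinus k Ψ) / 2 * l2Norm (restrict W u) *
        (Real.sqrt l * c + l1Norm (restrict S h) / Real.sqrt l) := by
  intro n
  induction n with
  | zero =>
    intro S hScard _ c hc _
    have hS : S = ∅ := Finset.card_eq_zero.1 (Nat.le_zero.1 hScard)
    subst hS
    have h0 : restrict (∅ : Finset (Fin N)) h = 0 := by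
      funext i; simp [restrict]
    rw [h0, Matrix.mulVec_zero]
    have hip0 : ip (Ψ.mulVec (restrict W u)) (0 : Fin m → ℝ) = 0 := by simp [ip]
    rw [hip0, abs_zero]
    have hl10 : l1Norm (0 : Fin N → ℝ) = 0 := by simp [l1Norm]
    rw [hl10, zero_div, add_zero]
    exact mul_nonneg (mul_nonneg (by linarith) (l2Norm_nonneg _))
      (mul_nonneg (Real.sqrt_nonneg _) hc)
  | succ n ih =>
    intro S hScard hWS c hc hbdd
    have hDl2 : 0 ≤ (rhoPlus k Ψ - rhoMinus k Ψ) / 2 * l2Norm (restrict W u) :=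
      mul_nonneg (by linarith) (l2Norm_nonneg _)
    have hslpos : (0:ℝ) < Real.sqrt l := Real.sqrt_pos.2 (by exact_mod_cast hl)
    by_cases hSl : S.card ≤ l
    · -- single block
      have hcross := cross_bound Ψ (k := k) hWS (by omega) u h
      have hnorm : l2Norm (restrict S h) ≤ Real.sqrt l * c := l2Norm_le_of_bdd hc hbdd l hSl
      calc |ip (Ψ.mulVec (restrict W u)) (Ψ.mulVec (restrict S h))|
          ≤ (rhoPlus k Ψ - rhoMinus k Ψ) / 2 * l2Norm (restrict W u) * l2Norm (restrict S h) :=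
            hcross
        _ ≤ (rhoPlus k Ψ - rhoMinus k Ψ) / 2 * l2Norm (restrict W u) * (Real.sqrt l * c) :=
            mul_le_mul_of_nonneg_left hnorm hDl2
        _ ≤ _ := by
            apply mul_le_mul_of_nonneg_left _ hDl2
            have : 0 ≤ l1Norm (restrict S h) / Real.sqrt l :=
              div_nonneg (l1Norm_nonneg _) hslpos.le
            linarith
    · -- peel off top block B of size l
      push_neg at hSl
      obtain ⟨B, hBS, hBcard, hBtop⟩ := exists_top (fun i => |h i|) S l hSl.le
      have hsplit : restrict S h = restrict B h + restrict (S \ B) h := restrict_split B S hBS h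
      set c' := l1Norm (restrict B h) / l with hc'
      have hc'0 : 0 ≤ c' := div_nonneg (l1Norm_nonneg _) (Nat.cast_nonneg _)
      have hbdd' : ∀ i ∈ S \ B, |h i| ≤ c' := by
        intro i hi
        have hle : ∀ j ∈ B, |h i| ≤ |h j| := hBtop i hi
        have hsum : (l : ℝ) * |h i| ≤ l1Norm (restrict B h) := by
          rw [l1Norm_restrict]
          calc (l : ℝ) * |h i| = ∑ _j ∈ B, |h i| := by
                rw [Finset.sum_const, nsmul_eq_mul, hBcard]
            _ ≤ ∑ j ∈ B, |h j| := Finset.sum_le_sum hle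
        rw [hc', le_div_iff₀ (by exact_mod_cast hl : (0:ℝ) < l)]
        linarith
      have hWSB : Disjoint W (S \ B) := hWS.mono_right (Finset.sdiff_subset)
      have hcard' : (S \ B).card ≤ n := by
        rw [Finset.card_sdiff_of_subset hBS, hBcard]
        omega
      have hIH := ih (S \ B) hcard' hWSB c' hc'0 hbdd'
      have hcrossB := cross_bound Ψ (hWS.mono_right hBS) (by omega : W.card + B.card ≤ k) u h
      have hnormB : l2Norm (restrict B h) ≤ Real.sqrt l * c :=
        l2Norm_le_of_bdd hc (fun i hi => hbdd i (hBS hi)) l hBcard.le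
      -- inner product splits
      have hipsplit : ip (Ψ.mulVec (restrict S h)) (Ψ.mulVec (restrict W u)) = 0 → True := fun _ => trivial
      have hmv : Ψ.mulVec (restrict S h) = Ψ.mulVec (restrict B h) + Ψ.mulVec (restrict (S \ B) h) := by
        rw [hsplit, Matrix.mulVec_add]
      have hiptri : |ip (Ψ.mulVec (restrict W u)) (Ψ.mulVec (restrict S h))| ≤
          |ip (Ψ.mulVec (restrict W u)) (Ψ.mulVec (restrict B h))| +
          |ip (Ψ.mulVec (restrict W u)) (Ψ.mulVec (restrict (S \ B) h))| := by
        rw [hmv]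
        have : ip (Ψ.mulVec (restrict W u)) (Ψ.mulVec (restrict B h) + Ψ.mulVec (restrict (S \ B) h)) =
            ip (Ψ.mulVec (restrict W u)) (Ψ.mulVec (restrict B h)) +
            ip (Ψ.mulVec (restrict W u)) (Ψ.mulVec (restrict (S \ B) h)) := by
          simp only [ip, Pi.add_apply, mul_add, Finset.sum_add_distrib]
        rw [this]
        exact abs_add_le _ _
      have hl1split : l1Norm (restrict S h) = l1Norm (restrict B h) + l1Norm (restrict (S \ B) h) := by
        rw [l1Norm_restrict, l1Norm_restrict, l1Norm_restrict]
        rw [← Finset.sum_union Finset.disjoint_sdiff, Finset.union_sdiff_of_subset hBS]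
      have hsqlc' : Real.sqrt l * c' = l1Norm (restrict B h) / Real.sqrt l := by
        have hmul : Real.sqrt l * Real.sqrt l = (l : ℝ) := Real.mul_self_sqrt (Nat.cast_nonneg _)
        have hl0 : (l : ℝ) ≠ 0 := by exact_mod_cast Nat.one_le_iff_ne_zero.1 hl
        rw [hc', eq_div_iff hslpos.ne']
        calc Real.sqrt l * (l1Norm (restrict B h) / l) * Real.sqrt l
            = (Real.sqrt l * Real.sqrt l) * (l1Norm (restrict B h) / l) := by ring
          _ = (l : ℝ) * (l1Norm (restrict B h) / l) := by rw [hmul]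
          _ = l1Norm (restrict B h) := by
              rw [mul_comm, div_mul_cancel₀ _ hl0]
      calc |ip (Ψ.mulVec (restrict W u)) (Ψ.mulVec (restrict S h))|
          ≤ |ip (Ψ.mulVec (restrict W u)) (Ψ.mulVec (restrict B h))| +
            |ip (Ψ.mulVec (restrict W u)) (Ψ.mulVec (restrict (S \ B) h))| := hiptri
        _ ≤ (rhoPlus k Ψ - rhoMinus k Ψ) / 2 * l2Norm (restrict W u) * (Real.sqrt l * c) +
            (rhoPlus k Ψ - rhoMinus k Ψ) / 2 * l2Norm (restrict W u) *
              (Real.sqrt l * c' + l1Norm (restrict (S \ B) h) / Real.sqrt l) := by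
            apply add_le_add _ hIH
            exact le_trans hcrossB (mul_le_mul_of_nonneg_left hnormB hDl2)
        _ = (rhoPlus k Ψ - rhoMinus k Ψ) / 2 * l2Norm (restrict W u) *
              (Real.sqrt l * c + l1Norm (restrict S h) / Real.sqrt l) := by
            rw [hsqlc', hl1split]
            ring
end aux5
section aux6
variable {Mt N : ℕ}

lemma ip_adjoint (Φ : Matrix (Fin Mt) (Fin N) ℝ) (h : Fin N → ℝ) (w : Fin Mt → ℝ) :
    ip (Φ.mulVec h) w = ip h (Φ.transpose.mulVec w) := by
  simp only [ip, Matrix.mulVec, dotProduct, Matrix.transpose_apply,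
    Finset.sum_mul, Finset.mul_sum]
  rw [Finset.sum_comm]
  exact Finset.sum_congr rfl fun j _ => Finset.sum_congr rfl fun i _ => by ring

lemma abs_ip_le_l1_linf (h : Fin N → ℝ) (z : Fin N → ℝ) :
    |ip h z| ≤ l1Norm h * linfNorm z := by
  have hbd : ∀ j : Fin N, |z j| ≤ linfNorm z := fun j =>
    le_ciSup (f := fun i => |z i|) (Set.Finite.bddAbove (Set.finite_range _)) j
  calc |ip h z| ≤ ∑ j, |h j * z j| := Finset.abs_sum_le_sum_abs _ _
    _ = ∑ j, |h j| * |z j| := Finset.sum_congr rfl fun j _ => abs_mul _ _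
    _ ≤ ∑ j, |h j| * linfNorm z := by
        apply Finset.sum_le_sum
        intro j _
        exact mul_le_mul_of_nonneg_left (hbd j) (abs_nonneg _)
    _ = l1Norm h * linfNorm z := by rw [l1Norm, Finset.sum_mul]

lemma mulVec_sub' (Φ : Matrix (Fin Mt) (Fin N) ℝ) (x y : Fin N → ℝ) :
    Φ.mulVec (x - y) = Φ.mulVec x - Φ.mulVec y := by
  funext i
  simp only [Matrix.mulVec, dotProduct, Pi.sub_apply, mul_sub, Finset.sum_sub_distrib]

lemma l1Norm_split (T : Finset (Fin N)) (v : Fin N → ℝ) :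
    l1Norm v = l1Norm (restrict T v) + l1Norm (restrict Tᶜ v) := by
  rw [l1Norm_restrict, l1Norm_restrict, l1Norm]
  exact (Finset.sum_add_sum_compl T _).symm

lemma l2sq_split (T : Finset (Fin N)) (v : Fin N → ℝ) :
    l2sq v = l2sq (restrict T v) + l2sq (restrict Tᶜ v) := by
  rw [l2sq_restrict, l2sq_restrict, l2sq]
  exact (Finset.sum_add_sum_compl T _).symm

lemma cone_condition (Φ : Matrix (Fin Mt) (Fin N) ℝ) (y : Fin Mt → ℝ)
    (lam Δ : ℝ) (hlamΔ : 0 < lam * Δ)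
    (xhat xstar : Fin N → ℝ)
    (hobj : lassoObj Φ y lam Δ xhat ≤ lassoObj Φ y lam Δ xstar)
    (hdual : linfNorm (Φ.transpose.mulVec (Φ.mulVec xstar - y)) ≤ lam * Δ / 2)
    (T₀ : Finset (Fin N)) :
    l1Norm (restrict T₀ᶜ (xhat - xstar)) ≤
      3 * l1Norm (restrict T₀ (xhat - xstar)) + 4 * l1Norm (restrict T₀ᶜ xstar) := by
  set h := xhat - xstar with hh
  set P := l1Norm (restrict T₀ h) with hP
  set Q := l1Norm (restrict T₀ᶜ h) with hQ
  set a := l1Norm (restrict T₀ᶜ xstar) with ha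
  -- identity
  have hid : Φ.mulVec xhat - y = Φ.mulVec h + (Φ.mulVec xstar - y) := by
    rw [hh, mulVec_sub']
    abel
  have hexp : l2sq (Φ.mulVec xhat - y) =
      l2sq (Φ.mulVec h) + 2 * ip (Φ.mulVec h) (Φ.mulVec xstar - y) +
        l2sq (Φ.mulVec xstar - y) := by
    rw [hid, l2sq_add]
  -- dual bound
  have hipbd : |ip (Φ.mulVec h) (Φ.mulVec xstar - y)| ≤ l1Norm h * (lam * Δ / 2) := by
    rw [ip_adjoint]
    calc |ip h (Φ.transpose.mulVec (Φ.mulVec xstar - y))|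
        ≤ l1Norm h * linfNorm (Φ.transpose.mulVec (Φ.mulVec xstar - y)) :=
          abs_ip_le_l1_linf _ _
      _ ≤ l1Norm h * (lam * Δ / 2) :=
          mul_le_mul_of_nonneg_left hdual (l1Norm_nonneg _)
  -- l1 difference bound
  have hl1diff : l1Norm xstar - l1Norm xhat ≤ P + 2 * a - Q := by
    have e1 : l1Norm xstar = ∑ i ∈ T₀, |xstar i| + ∑ i ∈ T₀ᶜ, |xstar i| := by
      rw [l1Norm]; exact (Finset.sum_add_sum_compl T₀ _).symm
    have e2 : l1Norm xhat = ∑ i ∈ T₀, |xhat i| + ∑ i ∈ T₀ᶜ, |xhat i| := by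
      rw [l1Norm]; exact (Finset.sum_add_sum_compl T₀ _).symm
    have hA : ∑ i ∈ T₀, |xstar i| - ∑ i ∈ T₀, |xhat i| ≤ P := by
      rw [hP, l1Norm_restrict, ← Finset.sum_sub_distrib]
      apply Finset.sum_le_sum
      intro i _
      have t := abs_sub_abs_le_abs_sub (xstar i) (xhat i)
      have t2 : |xstar i - xhat i| = |h i| := by
        rw [hh]
        simp only [Pi.sub_apply]
        rw [abs_sub_comm]
      linarith
    have hB : ∑ i ∈ T₀ᶜ, |xstar i| - ∑ i ∈ T₀ᶜ, |xhat i| ≤ 2 * a - Q := by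
      rw [ha, hQ, l1Norm_restrict, l1Norm_restrict]
      rw [show (2 * ∑ i ∈ T₀ᶜ, |xstar i|) - ∑ i ∈ T₀ᶜ, |h i| =
        ∑ i ∈ T₀ᶜ, (2 * |xstar i| - |h i|) from by
          rw [Finset.sum_sub_distrib, Finset.mul_sum]]
      rw [← Finset.sum_sub_distrib]
      apply Finset.sum_le_sum
      intro i _
      have t1 : |xhat i - xstar i| ≤ |xhat i| + |xstar i| := by
        rw [sub_eq_add_neg]
        exact (abs_add_le _ _).trans (by rw [abs_neg])
      have t2 : |h i| = |xhat i - xstar i| := by rw [hh]; rfl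
      linarith
    linarith
  -- combine
  have hl1h : l1Norm h = P + Q := by rw [hP, hQ, l1Norm_split T₀ h]
  have hobj' : (1/2) * l2sq (Φ.mulVec xhat - y) + lam * Δ * l1Norm xhat ≤
      (1/2) * l2sq (Φ.mulVec xstar - y) + lam * Δ * l1Norm xstar := hobj
  have hsqnn : 0 ≤ l2sq (Φ.mulVec h) := l2sq_nonneg _
  have habs := neg_abs_le (ip (Φ.mulVec h) (Φ.mulVec xstar - y))
  -- 0 ≤ (1/2) l2sq(Φh) ≤ lamΔ (l1 x* − l1 x̂) − ip ≤ lamΔ(P+2a−Q) + lamΔ/2 (P+Q)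
  have hmain : 0 ≤ lam * Δ * (P + 2*a - Q) + lam * Δ / 2 * (P + Q) := by
    nlinarith [hipbd, hl1diff, hl1h, hobj', hexp, hsqnn, habs, hlamΔ.le]
  have hfinal : 0 ≤ (3/2) * P + 2*a - (1/2) * Q := by
    have h2 : lam * Δ * (P + 2*a - Q) + lam * Δ / 2 * (P + Q) =
        lam * Δ * ((3/2) * P + 2*a - (1/2) * Q) := by ring
    rw [h2] at hmain
    exact nonneg_of_mul_nonneg_right hmain hlamΔ
  linarith

end aux6
section aux7

lemma quad_solve {X b c : ℝ} (hX : 0 ≤ X) (hb : 0 ≤ b) (hc : 0 ≤ c)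
    (h : X ^ 2 ≤ b * X + c) : X ≤ b + Real.sqrt c := by
  by_contra hcon
  push_neg at hcon
  nlinarith [Real.sq_sqrt hc, Real.sqrt_nonneg c]

lemma sqrt_combo {X Z q r : ℝ} (hX : 0 ≤ X) (hq : 0 ≤ q) (hr : 0 ≤ r) (hZ : 0 ≤ Z)
    (hZle : Z ≤ q + r) : Real.sqrt (X ^ 2 + Z ^ 2) ≤ Real.sqrt (X ^ 2 + q ^ 2) + r := by
  have hqle : q ≤ Real.sqrt (X ^ 2 + q ^ 2) := by
    have h0 := Real.sqrt_le_sqrt (show q ^ 2 ≤ X ^ 2 + q ^ 2 by nlinarith)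
    rwa [Real.sqrt_sq hq] at h0
  have hs := Real.sq_sqrt (by positivity : (0:ℝ) ≤ X ^ 2 + q ^ 2)
  have h1 : X ^ 2 + Z ^ 2 ≤ (Real.sqrt (X ^ 2 + q ^ 2) + r) ^ 2 := by
    nlinarith [Real.sqrt_nonneg (X ^ 2 + q ^ 2)]
  calc Real.sqrt (X ^ 2 + Z ^ 2) ≤ Real.sqrt ((Real.sqrt (X ^ 2 + q ^ 2) + r) ^ 2) :=
        Real.sqrt_le_sqrt h1
    _ = Real.sqrt (X ^ 2 + q ^ 2) + r :=
        Real.sqrt_sq (by positivity)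

lemma sqrt_mul_div_nat (x : ℝ) (l : ℕ) (hl : 1 ≤ l) :
    Real.sqrt l * (x / l) = x / Real.sqrt l := by
  have hl0 : (l : ℝ) ≠ 0 := by exact_mod_cast Nat.one_le_iff_ne_zero.1 hl
  have hslpos : (0:ℝ) < Real.sqrt l := Real.sqrt_pos.2 (by exact_mod_cast hl)
  have hmul : Real.sqrt l * Real.sqrt l = (l : ℝ) := Real.mul_self_sqrt (Nat.cast_nonneg _)
  rw [eq_div_iff hslpos.ne']
  calc Real.sqrt l * (x / l) * Real.sqrt l = (Real.sqrt l * Real.sqrt l) * (x / l) := by ring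
    _ = (l : ℝ) * (x / l) := by rw [hmul]
    _ = x := by rw [mul_comm, div_mul_cancel₀ _ hl0]

end aux7

set_option maxHeartbeats 1000000 in
theorem stmt15 {Mt Mb N : ℕ} (Φt : Matrix (Fin Mt) (Fin N) ℝ) (yt : Fin Mt → ℝ)
    (Φb : Matrix (Fin Mb) (Fin N) ℝ) (yb : Fin Mb → ℝ)
    (lam Δ : ℝ) (hlam : 0 < lam) (hΔ : 0 < Δ)
    (xhat xstar : Fin N → ℝ)
    (hxstarF : xstar ∈ feasible Φt yt Φb yb Δ)
    (hxhatF : xhat ∈ feasible Φt yt Φb yb Δ)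
    (hopt : ∀ x ∈ feasible Φt yt Φb yb Δ, lassoObj Φt yt lam Δ xhat ≤ lassoObj Φt yt lam Δ x)
    (hdual : linfNorm (Φt.transpose.mulVec (Φt.mulVec xstar - yt)) ≤ lam * Δ / 2)
    (s l : ℕ) (hs : 1 ≤ s) (hl : 1 ≤ l)
    (T₀ T₁ : Finset (Fin N)) (hT₀ : T₀.card = s)
    (hT₁sub : T₁ ⊆ T₀ᶜ) (hT₁card : T₁.card = l)
    (hlargest : ∀ i ∈ T₀ᶜ \ T₁, ∀ i' ∈ T₁, |(xhat - xstar) i| ≤ |(xhat - xstar) i'|)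
    (hA0 : 0 < A0 s l Φt) :
    l2Norm (xhat - xstar) ≤
      C2 s l Φt * Real.sqrt Mt * Δ +
        (C1 s l Φt / Real.sqrt l) * l1Norm (restrict T₀ᶜ xstar) := by
  have hdisj01 : Disjoint T₀ T₁ :=
    Finset.disjoint_left.2 fun i hi hT1 => (Finset.mem_compl.1 (hT₁sub hT1)) hi
  have hWcard : (T₀ ∪ T₁).card = s + l := by
    rw [Finset.card_union_of_disjoint hdisj01, hT₀, hT₁card]
  have hN : 1 ≤ N := by
    obtain ⟨i, _⟩ := Finset.card_pos.1 (by omega : 0 < T₀.card)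
    exact i.pos
  obtain ⟨h, hh⟩ : ∃ h, h = xhat - xstar := ⟨_, rfl⟩
  obtain ⟨W, hW⟩ : ∃ W, W = T₀ ∪ T₁ := ⟨_, rfl⟩
  obtain ⟨X, hX⟩ : ∃ X, X = l2Norm (restrict W h) := ⟨_, rfl⟩
  obtain ⟨Z, hZ⟩ : ∃ Z, Z = l2Norm (restrict Wᶜ h) := ⟨_, rfl⟩
  obtain ⟨a, ha⟩ : ∃ a, a = l1Norm (restrict T₀ᶜ xstar) := ⟨_, rfl⟩
  obtain ⟨Y, hY⟩ : ∃ Y, Y = l1Norm (restrict T₀ᶜ h) := ⟨_, rfl⟩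
  obtain ⟨D, hD⟩ : ∃ D, D = rhoPlus (s + 2 * l) Φt - rhoMinus (s + 2 * l) Φt := ⟨_, rfl⟩
  obtain ⟨ρ, hρ⟩ : ∃ ρ, ρ = rhoMinus (s + l) Φt := ⟨_, rfl⟩
  obtain ⟨il, hil⟩ : ∃ il, il = 1 / Real.sqrt l := ⟨_, rfl⟩
  rw [← hh, ← ha]
  have hXnn : 0 ≤ X := by rw [hX]; exact l2Norm_nonneg _
  have hZnn : 0 ≤ Z := by rw [hZ]; exact l2Norm_nonneg _
  have hann : 0 ≤ a := by rw [ha]; exact l1Norm_nonneg _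
  have hYnn : 0 ≤ Y := by rw [hY]; exact l1Norm_nonneg _
  have hDnn : 0 ≤ D := by
    rw [hD, sub_nonneg]
    exact rhoMinus_le_rhoPlus Φt (by omega) hN
  have hslpos : (0:ℝ) < Real.sqrt l := Real.sqrt_pos.2 (by exact_mod_cast hl)
  have hl0 : (0:ℝ) < (l:ℝ) := by exact_mod_cast hl
  have hilnn : 0 ≤ il := by rw [hil]; positivity
  have hil2 : il ^ 2 = 1 / (l : ℝ) := by
    rw [hil, div_pow, one_pow, Real.sq_sqrt hl0.le]
  have hsqsl : Real.sqrt ((s:ℝ) / l) = Real.sqrt s * il := by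
    rw [Real.sqrt_div (by positivity : (0:ℝ) ≤ (s:ℝ)), hil, div_eq_mul_one_div]
  have hA0eq : A0 s l Φt = ρ - 3 * (Real.sqrt s * il) * D := by
    rw [A0, hsqsl, hD, hρ]
  have hA1eq : A1 s l Φt = 4 * D := by rw [A1, hD]
  -- cone condition
  have hcone : Y ≤ 3 * l1Norm (restrict T₀ h) + 4 * a := by
    have h0 := cone_condition Φt yt lam Δ (mul_pos hlam hΔ) xhat xstar
      (hopt xstar hxstarF) hdual T₀
    rw [← hh] at h0
    rw [hY, ha]
    exact h0
  -- l1(T₀) ≤ √s X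
  have hT0X : l1Norm (restrict T₀ h) ≤ Real.sqrt s * X := by
    calc l1Norm (restrict T₀ h) ≤ Real.sqrt T₀.card * l2Norm (restrict T₀ h) :=
          l1_le_sqrt_card_mul_l2 T₀ h
      _ = Real.sqrt s * l2Norm (restrict T₀ h) := by rw [hT₀]
      _ ≤ Real.sqrt s * X := by
          rw [hX, hW]
          exact mul_le_mul_of_nonneg_left
            (l2Norm_restrict_mono (Finset.subset_union_left) h) (Real.sqrt_nonneg _)
  have hYX : Y ≤ 3 * Real.sqrt s * X + 4 * a := by
    have := mul_le_mul_of_nonneg_left hT0X (by norm_num : (0:ℝ) ≤ 3)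
    linarith
  -- feasibility bound
  have hK1 : l2sq (Φt.mulVec h) ≤ (Mt : ℝ) * Δ ^ 2 := by
    have hmv : Φt.mulVec h = (Φt.mulVec xhat - yt) - (Φt.mulVec xstar - yt) := by
      rw [hh, mulVec_sub']
      abel
    have hcoord : ∀ i, |(Φt.mulVec h) i| ≤ Δ := by
      intro i
      rw [hmv]
      have h1 := hxhatF.1 i
      have h2 := hxstarF.1 i
      have htri : |(Φt.mulVec xhat - yt) i - (Φt.mulVec xstar - yt) i| ≤
          |(Φt.mulVec xhat - yt) i| + |(Φt.mulVec xstar - yt) i| := by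
        rw [sub_eq_add_neg]
        exact (abs_add_le _ _).trans (by rw [abs_neg])
      have he : ((Φt.mulVec xhat - yt) - (Φt.mulVec xstar - yt)) i =
          (Φt.mulVec xhat - yt) i - (Φt.mulVec xstar - yt) i := rfl
      rw [he]
      linarith
    rw [l2sq]
    calc ∑ i, (Φt.mulVec h) i ^ 2 ≤ ∑ _i : Fin Mt, Δ ^ 2 := by
          apply Finset.sum_le_sum
          intro i _
          rw [← sq_abs]
          exact pow_le_pow_left₀ (abs_nonneg _) (hcoord i) 2
      _ = (Mt : ℝ) * Δ ^ 2 := by rw [Finset.sum_const, nsmul_eq_mul, Finset.card_univ,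
            Fintype.card_fin]
  -- tail coordinate bound
  obtain ⟨c, hc⟩ : ∃ c, c = l1Norm (restrict T₁ h) / l := ⟨_, rfl⟩
  have hcnn : 0 ≤ c := by rw [hc]; exact div_nonneg (l1Norm_nonneg _) hl0.le
  have hWc : Wᶜ = T₀ᶜ \ T₁ := by
    rw [hW]
    ext i
    simp only [Finset.mem_compl, Finset.mem_union, Finset.mem_sdiff]
    tauto
  have hbddS : ∀ i ∈ Wᶜ, |h i| ≤ c := by
    intro i hi
    rw [hWc] at hi
    have hle := hlargest i hi
    rw [← hh] at hle
    have hsum : (l : ℝ) * |h i| ≤ l1Norm (restrict T₁ h) := by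
      rw [l1Norm_restrict]
      calc (l : ℝ) * |h i| = ∑ _j ∈ T₁, |h i| := by
            rw [Finset.sum_const, nsmul_eq_mul, hT₁card]
        _ ≤ ∑ j ∈ T₁, |h j| := Finset.sum_le_sum hle
    rw [hc, le_div_iff₀ hl0]
    linarith
  have hYsplit : Y = l1Norm (restrict T₁ h) + l1Norm (restrict Wᶜ h) := by
    rw [hY, hWc, l1Norm_restrict, l1Norm_restrict, l1Norm_restrict,
      ← Finset.sum_union Finset.disjoint_sdiff, Finset.union_sdiff_of_subset hT₁sub]
  -- key cross-term bound
  have hkey := key_ind Φt h h W l (s + 2 * l) hl (by rw [hW, hWcard]; omega) (by rw [← hD]; exact hDnn)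
    Wᶜ.card Wᶜ le_rfl disjoint_compl_right c hcnn hbddS
  rw [← hD, ← hX] at hkey
  have hXsq : l2sq (restrict W h) = X ^ 2 := by rw [hX]; exact (l2Norm_sq _).symm
  have hZsq : l2sq (restrict Wᶜ h) = Z ^ 2 := by rw [hZ]; exact (l2Norm_sq _).symm
  have hlow : ρ * X ^ 2 ≤ l2sq (Φt.mulVec (restrict W h)) := by
    rw [← hXsq, hρ, hW]
    exact rho_lower Φt (le_of_eq hWcard) h
  have hexp : l2sq (Φt.mulVec h) = l2sq (Φt.mulVec (restrict W h)) +
      2 * ip (Φt.mulVec (restrict W h)) (Φt.mulVec (restrict Wᶜ h)) +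
      l2sq (Φt.mulVec (restrict Wᶜ h)) := by
    conv_lhs => rw [show h = restrict W h + restrict Wᶜ h from eq_restrict_add_compl W h]
    rw [Matrix.mulVec_add, l2sq_add]
  have hcrossY : |ip (Φt.mulVec (restrict W h)) (Φt.mulVec (restrict Wᶜ h))| ≤
      D / 2 * X * Y * il := by
    calc |ip (Φt.mulVec (restrict W h)) (Φt.mulVec (restrict Wᶜ h))|
        ≤ D / 2 * X * (Real.sqrt l * c + l1Norm (restrict Wᶜ h) / Real.sqrt l) := hkey
      _ = D / 2 * X * Y * il := by
          rw [hc, sqrt_mul_div_nat _ l hl, ← add_div, hYsplit, hil]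
          ring
  -- restricted eigenvalue bound
  have hRE : A0 s l Φt * X ^ 2 - (A1 s l Φt * il) * a * X ≤ l2sq (Φt.mulVec h) := by
    have h1 : 0 ≤ l2sq (Φt.mulVec (restrict Wᶜ h)) := l2sq_nonneg _
    have habs : -(D / 2 * X * Y * il) ≤
        ip (Φt.mulVec (restrict W h)) (Φt.mulVec (restrict Wᶜ h)) :=
      (abs_le.1 hcrossY).1
    have hstep : D * X * Y ≤ D * X * (3 * Real.sqrt s * X + 4 * a) :=
      mul_le_mul_of_nonneg_left hYX (mul_nonneg hDnn hXnn)
    have hstep2 : D * X * Y * il ≤ D * X * (3 * Real.sqrt s * X + 4 * a) * il :=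
      mul_le_mul_of_nonneg_right hstep hilnn
    have hlhs : A0 s l Φt * X ^ 2 - (A1 s l Φt * il) * a * X =
        ρ * X ^ 2 - D * X * (3 * Real.sqrt s * X + 4 * a) * il := by
      rw [hA0eq, hA1eq]; ring
    rw [hlhs, hexp]
    linarith [habs, hlow, h1, hstep2]
  -- quadratic inequality gives bound on X
  obtain ⟨b, hb⟩ : ∃ b, b = (A1 s l Φt * il) * a / A0 s l Φt := ⟨_, rfl⟩
  have hA1nn : 0 ≤ A1 s l Φt := by rw [hA1eq]; linarith
  have hbnn : 0 ≤ b := by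
    rw [hb]
    exact div_nonneg (mul_nonneg (mul_nonneg hA1nn hilnn) hann) hA0.le
  obtain ⟨cq, hcq⟩ : ∃ cq, cq = (Mt : ℝ) * Δ ^ 2 / A0 s l Φt := ⟨_, rfl⟩
  have hcqnn : 0 ≤ cq := by rw [hcq]; positivity
  have hquad : X ^ 2 ≤ b * X + cq := by
    rw [hb, hcq, div_mul_eq_mul_div, ← add_div, le_div_iff₀ hA0]
    linarith [hRE, hK1]
  have hXle : X ≤ b + Real.sqrt cq := quad_solve hXnn hbnn hcqnn hquad
  -- tail bound
  have hZY : Z ≤ Y * il := by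
    have hsq1 : l2sq (restrict Wᶜ h) ≤ c * l1Norm (restrict Wᶜ h) := by
      rw [l2sq_restrict, l1Norm_restrict, Finset.mul_sum]
      apply Finset.sum_le_sum
      intro i hi
      have hb := hbddS i hi
      rw [sq, ← abs_mul_abs_self]
      exact mul_le_mul_of_nonneg_right hb (abs_nonneg _)
    have hcY2 : c ≤ Y / l := by
      rw [hc]
      have h7 : l1Norm (restrict T₁ h) ≤ Y := by
        rw [hYsplit]
        have := l1Norm_nonneg (restrict Wᶜ h)
        linarith
      exact (div_le_div_iff_of_pos_right hl0).2 h7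
    have hl1Y : l1Norm (restrict Wᶜ h) ≤ Y := by
      rw [hYsplit]
      have := l1Norm_nonneg (restrict T₁ h)
      linarith
    have hZsq2 : Z ^ 2 ≤ Y ^ 2 / l := by
      rw [← hZsq]
      calc l2sq (restrict Wᶜ h) ≤ c * l1Norm (restrict Wᶜ h) := hsq1
        _ ≤ (Y / l) * Y :=
            mul_le_mul hcY2 hl1Y (l1Norm_nonneg _) (by positivity)
        _ = Y ^ 2 / l := by ring
    have h5 := Real.sqrt_le_sqrt hZsq2
    rw [Real.sqrt_sq hZnn] at h5
    calc Z ≤ Real.sqrt (Y ^ 2 / l) := h5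
      _ = Y * il := by
          rw [Real.sqrt_div (sq_nonneg Y), Real.sqrt_sq hYnn, hil, div_eq_mul_one_div]
  have hZqr : Z ≤ 3 * (Real.sqrt s * il) * X + 4 * a * il := by
    calc Z ≤ Y * il := hZY
      _ ≤ (3 * Real.sqrt s * X + 4 * a) * il := mul_le_mul_of_nonneg_right hYX hilnn
      _ = 3 * (Real.sqrt s * il) * X + 4 * a * il := by ring
  -- norm decomposition
  have hnorm : l2Norm h = Real.sqrt (X ^ 2 + Z ^ 2) := by
    rw [l2Norm_eq, l2sq_split W h, hXsq, hZsq]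
  have hqnn : 0 ≤ 3 * (Real.sqrt s * il) * X := by
    have := Real.sqrt_nonneg (s:ℝ)
    positivity
  have hrnn : 0 ≤ 4 * a * il := by positivity
  have hcombo := sqrt_combo hXnn hqnn hrnn hZnn hZqr
  have hXq : Real.sqrt (X ^ 2 + (3 * (Real.sqrt s * il) * X) ^ 2) =
      X * Real.sqrt (1 + 9 * (s : ℝ) / l) := by
    have hqsq : (3 * (Real.sqrt s * il) * X) ^ 2 = 9 * ((s:ℝ) / l) * X ^ 2 := by
      rw [mul_pow, mul_pow, mul_pow, Real.sq_sqrt (by positivity : (0:ℝ) ≤ (s:ℝ)), hil2]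
      ring
    have he : X ^ 2 + (3 * (Real.sqrt s * il) * X) ^ 2 = X ^ 2 * (1 + 9 * (s:ℝ) / l) := by
      rw [hqsq]; ring
    rw [he, Real.sqrt_mul (sq_nonneg X), Real.sqrt_sq hXnn]
  have hPnn : 0 ≤ Real.sqrt (1 + 9 * (s : ℝ) / l) := Real.sqrt_nonneg _
  have hfin1 : l2Norm h ≤ (b + Real.sqrt cq) * Real.sqrt (1 + 9 * (s : ℝ) / l) + 4 * a * il := by
    rw [hnorm]
    calc Real.sqrt (X ^ 2 + Z ^ 2)
        ≤ Real.sqrt (X ^ 2 + (3 * (Real.sqrt s * il) * X) ^ 2) + 4 * a * il := hcombo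
      _ = X * Real.sqrt (1 + 9 * (s : ℝ) / l) + 4 * a * il := by rw [hXq]
      _ ≤ (b + Real.sqrt cq) * Real.sqrt (1 + 9 * (s : ℝ) / l) + 4 * a * il := by
          have := mul_le_mul_of_nonneg_right hXle hPnn
          linarith
  have hsqcq : Real.sqrt cq = Real.sqrt Mt * Δ / Real.sqrt (A0 s l Φt) := by
    rw [hcq, Real.sqrt_div (by positivity : (0:ℝ) ≤ (Mt:ℝ) * Δ ^ 2),
      Real.sqrt_mul (Nat.cast_nonneg _), Real.sqrt_sq hΔ.le]
  have hC2 : C2 s l Φt = Real.sqrt (1 + 9 * (s : ℝ) / l) / Real.sqrt (A0 s l Φt) := by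
    rw [C2, Real.sqrt_div (by positivity : (0:ℝ) ≤ 1 + 9 * (s:ℝ) / l)]
  have hrhs : (b + Real.sqrt cq) * Real.sqrt (1 + 9 * (s : ℝ) / l) + 4 * a * il =
      C2 s l Φt * Real.sqrt Mt * Δ + (C1 s l Φt / Real.sqrt l) * a := by
    rw [hb, hsqcq, hC2, C1, hil]
    ring
  rw [hrhs] at hfin1
  exact hfin1
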